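/- Let G₂ = ℤ/2 and G₄ = ℤ/2 with μ : G₂ × G₂ → G₄ the nonzero symmetric bilinear map (μ(1,1) = 1). Let A be the ring presented by generators ℓ (for L_x, x the generator of G₂) and v (for V_y, y the generator of G₄) over ℤ with relations ℓ² = 1, 2ℓ = v, 2v = 4. Then A ≅ ℤ[u]/(u² + 2u, 4u) via u = ℓ − 1, and the ideal of rank-zero elements of A is cyclic of order 4. -/

import Mathlib

set_option maxHeartbeats 1000000
set_option synthInstance.maxHeartbeats 400000

noncomputable section KRP4Aux

open Polynomial MvPolynomial

abbrev KI : Ideal (Polynomial ℤ) :=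
  Ideal.span {Polynomial.X ^ 2 + 2 * Polynomial.X, 4 * Polynomial.X}

abbrev KJ : Ideal (MvPolynomial (Fin 2) ℤ) :=
  Ideal.span {MvPolynomial.X 0 ^ 2 - 1,
    2 * MvPolynomial.X 0 - MvPolynomial.X 1,
    2 * MvPolynomial.X 1 - 4}

abbrev KQB := Polynomial ℤ ⧸ KI
abbrev KQA := MvPolynomial (Fin 2) ℤ ⧸ KJ

lemma KI_mem1 : (Polynomial.X ^ 2 + 2 * Polynomial.X : Polynomial ℤ) ∈ KI :=
  Ideal.subset_span (by simp)

lemma KI_mem2 : (4 * Polynomial.X : Polynomial ℤ) ∈ KI :=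
  Ideal.subset_span (by simp)

lemma KJ_mem1 : (MvPolynomial.X 0 ^ 2 - 1 : MvPolynomial (Fin 2) ℤ) ∈ KJ :=
  Ideal.subset_span (by simp)

lemma KJ_mem2 : (2 * MvPolynomial.X 0 - MvPolynomial.X 1 : MvPolynomial (Fin 2) ℤ) ∈ KJ :=
  Ideal.subset_span (by simp)

lemma KJ_mem3 : (2 * MvPolynomial.X 1 - 4 : MvPolynomial (Fin 2) ℤ) ∈ KJ :=
  Ideal.subset_span (by simp)

lemma KQB_sq :
    (Ideal.Quotient.mk KI Polynomial.X) ^ 2 = -(2 * Ideal.Quotient.mk KI Polynomial.X) := by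
  have := Ideal.Quotient.eq_zero_iff_mem.2 KI_mem1
  simp only [map_add, map_mul, map_pow, map_ofNat] at this
  linear_combination this

lemma KQB_four : (4 : KQB) * Ideal.Quotient.mk KI Polynomial.X = 0 := by
  have := Ideal.Quotient.eq_zero_iff_mem.2 KI_mem2
  simp only [map_mul, map_ofNat] at this
  linear_combination this

lemma KQB_pow (m : ℕ) : (Ideal.Quotient.mk KI Polynomial.X) ^ (m + 1) =
    (((-2 : ℤ) ^ m : ℤ) : KQB) * Ideal.Quotient.mk KI Polynomial.X := by
  induction m with
  | zero => simp
  | succ k ih =>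
    rw [pow_succ, ih]
    have := KQB_sq
    push_cast
    linear_combination ((-2 : ℤ) ^ k : KQB) * this

/-- reduction: every element of `KQB` is `a + c * X`. -/
lemma KQB_reduce (p : Polynomial ℤ) :
    ∃ c : ℤ, Ideal.Quotient.mk KI p =
      ((p.eval 0 : ℤ) : KQB) + (c : KQB) * Ideal.Quotient.mk KI Polynomial.X := by
  induction p using Polynomial.induction_on with
  | C a => exact ⟨0, by simp [Polynomial.C_eq_intCast]⟩
  | add p q hp hq =>
    obtain ⟨c, hc⟩ := hp
    obtain ⟨d, hd⟩ := hq
    refine ⟨c + d, ?_⟩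
    rw [map_add, hc, hd]
    push_cast [Polynomial.eval_add]
    ring
  | monomial n a _ =>
    refine ⟨a * (-2) ^ n, ?_⟩
    rw [map_mul, map_pow, KQB_pow n]
    have hC : (Ideal.Quotient.mk KI) (Polynomial.C a) = ((a : ℤ) : KQB) := by
      simp [Polynomial.C_eq_intCast]
    rw [hC]
    simp only [Polynomial.eval_mul, Polynomial.eval_C, Polynomial.eval_pow, Polynomial.eval_X]
    push_cast
    ring

/-- rank map on `KQB`. -/
def KrkB : KQB →+* ℤ :=
  Ideal.Quotient.lift KI (Polynomial.evalRingHom 0) (fun a ha => by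
    have h : KI ≤ RingHom.ker (Polynomial.evalRingHom (0 : ℤ)) :=
      Ideal.span_le.mpr (by rintro x (rfl | rfl) <;> simp [RingHom.mem_ker])
    exact RingHom.mem_ker.mp (h ha))

@[simp] lemma KrkB_mk (p : Polynomial ℤ) : KrkB (Ideal.Quotient.mk KI p) = p.eval 0 := rfl

/-- detector map to `ZMod 8`, `X ↦ 2`. -/
def Kdet : KQB →+* ZMod 8 :=
  Ideal.Quotient.lift KI (Polynomial.eval₂RingHom (Int.castRingHom (ZMod 8)) 2) (fun a ha => by
    have h : KI ≤ RingHom.ker (Polynomial.eval₂RingHom (Int.castRingHom (ZMod 8)) 2) :=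
      Ideal.span_le.mpr (by rintro x (rfl | rfl) <;> simp [RingHom.mem_ker] <;> decide)
    exact RingHom.mem_ker.mp (h ha))

@[simp] lemma Kdet_mk (p : Polynomial ℤ) :
    Kdet (Ideal.Quotient.mk KI p) = Polynomial.eval₂ (Int.castRingHom (ZMod 8)) 2 p := rfl

lemma KQB_X_order : addOrderOf (Ideal.Quotient.mk KI Polynomial.X) = 4 := by
  rw [addOrderOf_eq_iff (by norm_num)]
  constructor
  · have h4 := KQB_four
    rw [nsmul_eq_mul]
    push_cast
    linear_combination h4
  · intro m hm hm0 hcon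
    have : Kdet ((m : ℕ) • Ideal.Quotient.mk KI Polynomial.X) = 0 := by rw [hcon]; simp
    rw [map_nsmul, Kdet_mk] at this
    simp only [Polynomial.eval₂_X, nsmul_eq_mul] at this
    interval_cases m <;> revert this <;> simp <;> decide

/-- the forward map `KQA →+* KQB`. -/
def KF : KQA →+* KQB :=
  Ideal.Quotient.lift KJ
    (MvPolynomial.eval₂Hom (Int.castRingHom KQB)
      ![Ideal.Quotient.mk KI Polynomial.X + 1, 2 * Ideal.Quotient.mk KI Polynomial.X + 2])
    (fun a ha => by
    have h : KJ ≤ RingHom.ker (MvPolynomial.eval₂Hom (Int.castRingHom KQB)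
        ![Ideal.Quotient.mk KI Polynomial.X + 1, 2 * Ideal.Quotient.mk KI Polynomial.X + 2]) := by
      refine Ideal.span_le.mpr ?_
      rintro x (rfl | rfl | rfl) <;>
        simp only [RingHom.mem_ker, SetLike.mem_coe, map_sub, map_add, map_mul, map_pow, map_one,
          map_ofNat, MvPolynomial.eval₂Hom_X', Matrix.cons_val_zero, Matrix.cons_val_one,
          Matrix.head_cons]
      · linear_combination KQB_sq
      · ring
      · linear_combination KQB_four
    exact RingHom.mem_ker.mp (h ha))

/-- the backward map `KQB →+* KQA`. -/
def KG : KQB →+* KQA :=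
  Ideal.Quotient.lift KI
    (Polynomial.eval₂RingHom (Int.castRingHom KQA)
      (Ideal.Quotient.mk KJ (MvPolynomial.X 0) - 1)) (fun a ha => by
    have h : KI ≤ RingHom.ker (Polynomial.eval₂RingHom (Int.castRingHom KQA)
        (Ideal.Quotient.mk KJ (MvPolynomial.X 0) - 1)) := by
      refine Ideal.span_le.mpr ?_
      have h1 := Ideal.Quotient.eq_zero_iff_mem.2 KJ_mem1
      have h2 := Ideal.Quotient.eq_zero_iff_mem.2 KJ_mem2
      have h3 := Ideal.Quotient.eq_zero_iff_mem.2 KJ_mem3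
      simp only [map_sub, map_add, map_mul, map_pow, map_one, map_ofNat] at h1 h2 h3
      rintro x (rfl | rfl) <;>
        simp only [RingHom.mem_ker, SetLike.mem_coe, coe_eval₂RingHom, Polynomial.eval₂_add,
          Polynomial.eval₂_mul, Polynomial.eval₂_pow, Polynomial.eval₂_X, Polynomial.eval₂_ofNat]
      · linear_combination h1
      · linear_combination 2 * h2 + h3
    exact RingHom.mem_ker.mp (h ha))

@[simp] lemma KF_mk (p : MvPolynomial (Fin 2) ℤ) :
    KF (Ideal.Quotient.mk KJ p) = MvPolynomial.eval₂ (Int.castRingHom KQB)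
      ![Ideal.Quotient.mk KI Polynomial.X + 1, 2 * Ideal.Quotient.mk KI Polynomial.X + 2] p := rfl

@[simp] lemma KG_mk (p : Polynomial ℤ) :
    KG (Ideal.Quotient.mk KI p) = Polynomial.eval₂ (Int.castRingHom KQA)
      (Ideal.Quotient.mk KJ (MvPolynomial.X 0) - 1) p := rfl

lemma KGF : (KG.comp KF) = RingHom.id KQA := by
  apply Ideal.Quotient.ringHom_ext
  apply MvPolynomial.ringHom_ext
  · intro a
    simp [MvPolynomial.C_eq_smul_one, Algebra.smul_def, algebraMap_int_eq]
  · intro i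
    fin_cases i
    · show KG (KF (Ideal.Quotient.mk KJ (MvPolynomial.X 0))) = Ideal.Quotient.mk KJ (MvPolynomial.X 0)
      rw [KF_mk]
      simp only [MvPolynomial.eval₂_X, Matrix.cons_val_zero]
      rw [map_add, map_one, KG_mk]
      simp
    · show KG (KF (Ideal.Quotient.mk KJ (MvPolynomial.X 1))) = Ideal.Quotient.mk KJ (MvPolynomial.X 1)
      rw [KF_mk]
      simp only [MvPolynomial.eval₂_X, Matrix.cons_val_one, Matrix.head_cons, Matrix.cons_val_zero]
      rw [map_add, map_mul, KG_mk]
      have h2 := Ideal.Quotient.eq_zero_iff_mem.2 KJ_mem2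
      simp only [map_sub, map_mul, map_ofNat] at h2
      simp only [Polynomial.eval₂_X, map_ofNat]
      linear_combination h2

lemma KFG : (KF.comp KG) = RingHom.id KQB := by
  apply Ideal.Quotient.ringHom_ext
  apply Polynomial.ringHom_ext
  · intro a
    simp [Polynomial.C_eq_intCast]
  · simp only [RingHom.comp_apply, RingHom.id_apply, KG_mk, Polynomial.eval₂_X]
    rw [map_sub, map_one, KF_mk]
    simp

/-- the equivalence `KQA ≃+* KQB`. -/
def Kθ : KQA ≃+* KQB := RingEquiv.ofRingHom KF KG KFG KGF

end KRP4Aux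

/-- Let `A = ℤ[ℓ, v]/(ℓ² − 1, 2ℓ − v, 2v − 4)` be the ring presented by the
relations `ℓ² = 1`, `2ℓ = v`, `2v = 4` (modeling `K⁰(ℝP⁴)` via the paper's
presentation with `G₂ = G₄ = ℤ/2` and nonzero cup product). Then
`A ≅ ℤ[u]/(u² + 2u, 4u)` via `ℓ ↦ u + 1`, and the ideal of rank-zero elements
(the kernel of the rank homomorphism `A → ℤ` with `ℓ ↦ 1`, `v ↦ 2`) is cyclic of
order 4. -/
theorem KRP4_presentation :
    ∀ (A B : Type) (_ : CommRing A) (_ : CommRing B)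
      (eA : A ≃+* MvPolynomial (Fin 2) ℤ ⧸
        (Ideal.span {MvPolynomial.X 0 ^ 2 - 1,
          2 * MvPolynomial.X 0 - MvPolynomial.X 1,
          2 * MvPolynomial.X 1 - 4} : Ideal (MvPolynomial (Fin 2) ℤ)))
      (eB : B ≃+* Polynomial ℤ ⧸
        (Ideal.span {Polynomial.X ^ 2 + 2 * Polynomial.X,
          4 * Polynomial.X} : Ideal (Polynomial ℤ)))
      (ℓ v : A) (u : B)
      (_ : eA ℓ = Ideal.Quotient.mk _ (MvPolynomial.X 0))
      (_ : eA v = Ideal.Quotient.mk _ (MvPolynomial.X 1))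
      (_ : eB u = Ideal.Quotient.mk _ Polynomial.X),
    (∃ e : A ≃+* B, e ℓ = u + 1) ∧
    (∃ f : A →+* ℤ, f ℓ = 1 ∧ f v = 2 ∧
      ∃ z : A, f z = 0 ∧ addOrderOf z = 4 ∧
        ∀ w : A, f w = 0 → ∃ n : ℤ, w = n • z) := by
  intro A B _ _ eA eB ℓ v u hℓ hv hu
  have hKθℓ : Kθ (eA ℓ) = Ideal.Quotient.mk KI Polynomial.X + 1 := by
    rw [hℓ]
    show KF (Ideal.Quotient.mk KJ (MvPolynomial.X 0)) = _
    simp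
  have hKθv : Kθ (eA v) = 2 * Ideal.Quotient.mk KI Polynomial.X + 2 := by
    rw [hv]
    show KF (Ideal.Quotient.mk KJ (MvPolynomial.X 1)) = _
    simp
  constructor
  · refine ⟨(eA.trans Kθ).trans eB.symm, ?_⟩
    have : eB.symm (Ideal.Quotient.mk KI Polynomial.X) = u := by
      rw [← hu, RingEquiv.symm_apply_apply]
    simp only [RingEquiv.trans_apply, hKθℓ, map_add, map_one, this]
  · refine ⟨(KrkB.comp Kθ.toRingHom).comp eA.toRingHom, ?_, ?_, ?_⟩
    · simp only [RingHom.comp_apply, RingEquiv.toRingHom_eq_coe, RingHom.coe_coe, hKθℓ]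
      rw [map_add, map_one]
      simp
    · simp only [RingHom.comp_apply, RingEquiv.toRingHom_eq_coe, RingHom.coe_coe, hKθv]
      rw [map_add, map_mul, map_ofNat]
      simp
    · refine ⟨eA.symm (Kθ.symm (Ideal.Quotient.mk KI Polynomial.X)), ?_, ?_, ?_⟩
      · simp only [RingHom.comp_apply, RingEquiv.toRingHom_eq_coe, RingHom.coe_coe,
          RingEquiv.apply_symm_apply]
        simp
      · rw [← KQB_X_order]
        calc addOrderOf (eA.symm (Kθ.symm (Ideal.Quotient.mk KI Polynomial.X)))
            = addOrderOf (Kθ.symm (Ideal.Quotient.mk KI Polynomial.X)) :=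
              (eA.symm.toAddEquiv).addOrderOf_eq _
          _ = addOrderOf (Ideal.Quotient.mk KI Polynomial.X) :=
              (Kθ.symm.toAddEquiv).addOrderOf_eq _
      · intro w hw
        obtain ⟨p, hp⟩ := Ideal.Quotient.mk_surjective (I := KI) (Kθ (eA w))
        obtain ⟨c, hc⟩ := KQB_reduce p
        have hrank : (p.eval 0 : ℤ) = 0 := by
          have : KrkB (Kθ (eA w)) = 0 := hw
          rw [← hp, KrkB_mk] at this
          exact this
        refine ⟨c, ?_⟩
        have hcw : Kθ (eA w) = (c : KQB) * Ideal.Quotient.mk KI Polynomial.X := by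
          rw [← hp, hc, hrank]
          push_cast
          ring
        have hA : eA w = (c : _) * Kθ.symm (Ideal.Quotient.mk KI Polynomial.X) := by
          apply Kθ.injective
          rw [hcw, map_mul, map_intCast, RingEquiv.apply_symm_apply]
        have : w = (c : A) * eA.symm (Kθ.symm (Ideal.Quotient.mk KI Polynomial.X)) := by
          apply eA.injective
          rw [hA, map_mul, map_intCast, RingEquiv.apply_symm_apply]
        rw [this, zsmul_eq_mul]
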